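/- Let w_0, …, w_n ∈ C^n. Then there exist complex numbers θ_0, …, θ_n and vectors w̃_j = e^{iθ_j} w_j (in particular ‖w̃_j‖ = ‖w_j‖ for each j) together with nonnegative real numbers r_0, …, r_n satisfying r_0 + … + r_n = 1 and r_0 w̃_0 + … + r_n w̃_n = 0; moreover |det(w̃_{j_1}, …, w̃_{j_n})| = |det(w_{j_1}, …, w_{j_n})| for all index choices 0 ≤ j_1 < … < j_n ≤ n. -/

import Mathlib

/-- Given `w₀, …, wₙ ∈ ℂⁿ`, one can rotate each `wⱼ` by a unimodular factor `e^{iθⱼ}`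
(so that norms are preserved) to obtain `w̃ⱼ = e^{iθⱼ} wⱼ`, in such a way that some
convex combination of the `w̃ⱼ` is zero, while all `n × n` determinant absolute values
are unchanged. -/
theorem stmt7 (n : ℕ) (w : Fin (n + 1) → EuclideanSpace ℂ (Fin n)) :
    ∃ θ : Fin (n + 1) → ℂ, ∃ wt : Fin (n + 1) → EuclideanSpace ℂ (Fin n),
      (∀ j, wt j = Complex.exp (Complex.I * θ j) • w j) ∧
      (∀ j, ‖wt j‖ = ‖w j‖) ∧
      (∃ r : Fin (n + 1) → ℝ,
        (∀ j, 0 ≤ r j) ∧ (∑ j, r j = 1) ∧ (∑ j, (r j : ℂ) • wt j = 0)) ∧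
      (∀ s : Fin n → Fin (n + 1), StrictMono s →
        ‖Matrix.det (Matrix.of fun i a => wt (s a) i)‖ =
          ‖Matrix.det (Matrix.of fun i a => w (s a) i)‖) := by
  have hnotli : ¬ LinearIndependent ℂ w := by
    intro h
    have := h.fintype_card_le_finrank
    simp [finrank_euclideanSpace] at this
  obtain ⟨c, hc0, i, hci⟩ := Fintype.not_linearIndependent_iff.mp hnotli
  set S : ℝ := ∑ j, ‖c j‖ with hS
  have hSpos : 0 < S := by
    refine Finset.sum_pos' (fun j _ => by positivity) ⟨i, Finset.mem_univ i, ?_⟩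
    simpa using hci
  refine ⟨fun j => ((c j).arg : ℂ),
    fun j => Complex.exp (Complex.I * ((c j).arg : ℂ)) • w j,
    fun j => rfl, ?_, ?_, ?_⟩
  · intro j
    rw [norm_smul]
    simp [Complex.norm_exp]
  · refine ⟨fun j => ‖c j‖ / S, fun j => by positivity, ?_, ?_⟩
    · rw [← Finset.sum_div, ← hS, div_self hSpos.ne']
    · have key : ∀ j, ((‖c j‖ / S : ℝ) : ℂ) •
          (Complex.exp (Complex.I * ((c j).arg : ℂ)) • w j)
          = ((S : ℂ))⁻¹ • (c j • w j) := by
        intro j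
        rw [smul_smul, smul_smul]
        congr 1
        push_cast
        rw [mul_comm Complex.I, div_mul_eq_mul_div, Complex.norm_mul_exp_arg_mul_I,
          div_eq_inv_mul]
      simp only [key, ← Finset.smul_sum, hc0, smul_zero]
  · intro s hs
    have : (Matrix.of fun i a => (Complex.exp (Complex.I * ((c (s a)).arg : ℂ)) • w (s a)) i)
        = Matrix.of fun i a => (fun a => Complex.exp (Complex.I * ((c (s a)).arg : ℂ))) a
            * (Matrix.of fun i a => w (s a) i) i a := by
      ext i a
      simp [PiLp.smul_apply, smul_eq_mul]
    rw [this, Matrix.det_mul_row, norm_mul, norm_prod]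
    have : ∀ a : Fin n, ‖Complex.exp (Complex.I * ((c (s a)).arg : ℂ))‖ = 1 := by
      intro a; simp [Complex.norm_exp]
    simp [this]
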